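/- (Theorem 1 for kNN) Let X be a metric space, c ≥ 2, k a natural number, ρ : X × Fin c → ℕ injective, D a multiset over X × Fin c, and x : X. Let a := kNN_k(D,x), s_l := s_l(N_k(D,x)), and let b be the largest label among those l ≠ a attaining the maximum of s_l over l ≠ a. Then for every multiset D* over X × Fin c with S(D,D*) ≤ ⌈(s_a − s_b + 𝟙(b < a))/2⌉ − 1 (an inequality of integers), kNN_k(D*,x) = a. -/

import Mathlib

/-- Poisoning size between two multisets: `max (card A) (card B) - card (A ∩ B)`. -/
noncomputable def pSize {α : Type*} (A B : Multiset α) : ℕ :=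
  haveI := Classical.decEq α
  max A.card B.card - (A ∩ B).card

/-- Number of votes for label `l` in a multiset of labeled examples (counted with
multiplicity). -/
def votes {X : Type*} {c : ℕ} (T : Multiset (X × Fin c)) (l : Fin c) : ℕ :=
  T.countP (fun p => p.2 = l)

/-- Tie-broken majority label: the largest label (in the order of `Fin c`) among the
labels attaining the maximum vote count. -/
noncomputable def majLabel {X : Type*} {c : ℕ} (hc : 0 < c) (T : Multiset (X × Fin c)) :
    Fin c :=
  (Finset.univ.filter (fun l : Fin c => ∀ l', votes T l' ≤ votes T l)).max'
    (by
      haveI : NeZero c := ⟨hc.ne'⟩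
      obtain ⟨b, -, hb⟩ := Finset.exists_max_image (Finset.univ : Finset (Fin c)) (votes T)
        Finset.univ_nonempty
      exact ⟨b, Finset.mem_filter.mpr ⟨Finset.mem_univ b, fun l' => hb l' (Finset.mem_univ l')⟩⟩)

/-- The largest label, among those `l ≠ a`, attaining the maximum of `s l` over `l ≠ a`. -/
noncomputable def secondLabel {c : ℕ} (hc : 2 ≤ c) (s : Fin c → ℕ) (a : Fin c) : Fin c :=
  (Finset.univ.filter (fun l : Fin c => l ≠ a ∧ ∀ l', l' ≠ a → s l' ≤ s l)).max'
    (by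
      have h1 : 1 < Fintype.card (Fin c) := by rw [Fintype.card_fin]; omega
      obtain ⟨l0, hl0⟩ := Fintype.exists_ne_of_one_lt_card h1 a
      have hne : (Finset.univ.filter (fun l : Fin c => l ≠ a)).Nonempty :=
        ⟨l0, Finset.mem_filter.mpr ⟨Finset.mem_univ _, hl0⟩⟩
      obtain ⟨b, hb, hbmax⟩ := Finset.exists_max_image _ s hne
      refine ⟨b, Finset.mem_filter.mpr ⟨Finset.mem_univ _, (Finset.mem_filter.mp hb).2, ?_⟩⟩
      intro l' hl'
      exact hbmax l' (Finset.mem_filter.mpr ⟨Finset.mem_univ _, hl'⟩))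

/-- The kNN ordering w.r.t. a test input `x`, with ties broken by the ranking `ρ`
(larger ranks first): `p` precedes `q` iff `dist p.1 x < dist q.1 x`, or
`dist p.1 x = dist q.1 x` and `ρ p ≥ ρ q`. -/
def knnLE {X : Type*} [MetricSpace X] {c : ℕ} (ρ : X × Fin c → ℕ) (x : X)
    (p q : X × Fin c) : Prop :=
  dist p.1 x < dist q.1 x ∨ (dist p.1 x = dist q.1 x ∧ ρ q ≤ ρ p)

/-- kNN neighbor multiset: the first `min k (card D)` elements of `D` in the order
`knnLE ρ x` (sort `D` by this order and take the first `k`). -/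
noncomputable def Nk {X : Type*} [MetricSpace X] {c : ℕ} {ρ : X × Fin c → ℕ}
    (hρ : Function.Injective ρ) (k : ℕ) (D : Multiset (X × Fin c)) (x : X) :
    Multiset (X × Fin c) :=
  haveI : DecidableRel (knnLE ρ x) := Classical.decRel _
  haveI : IsTrans _ (knnLE ρ x) := ⟨by
    rintro p q s (h1 | ⟨h1, h1'⟩) (h2 | ⟨h2, h2'⟩)
    · exact Or.inl (h1.trans h2)
    · exact Or.inl (h1.trans_eq h2)
    · exact Or.inl (h1.trans_lt h2)
    · exact Or.inr ⟨h1.trans h2, h2'.trans h1'⟩⟩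
  haveI : IsAntisymm _ (knnLE ρ x) := ⟨by
    rintro p q (h1 | ⟨h1, h1'⟩) (h2 | ⟨h2, h2'⟩)
    · exact absurd h2 (lt_asymm h1)
    · exact absurd h2.symm h1.ne
    · exact absurd h1.symm h2.ne
    · exact hρ (le_antisymm h2' h1')⟩
  haveI : IsTotal _ (knnLE ρ x) := ⟨by
    intro p q
    rcases lt_trichotomy (dist p.1 x) (dist q.1 x) with h | h | h
    · exact Or.inl (Or.inl h)
    · rcases le_total (ρ q) (ρ p) with h' | h'
      · exact Or.inl (Or.inr ⟨h, h'⟩)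
      · exact Or.inr (Or.inr ⟨h.symm, h'⟩)
    · exact Or.inr (Or.inl h)⟩
  (↑((D.sort (knnLE ρ x)).take k) : Multiset (X × Fin c))

/-- kNN prediction: tie-broken majority label among the kNN neighbors. -/
noncomputable def kNNpred {X : Type*} [MetricSpace X] {c : ℕ} (hc : 0 < c)
    {ρ : X × Fin c → ℕ} (hρ : Function.Injective ρ) (k : ℕ)
    (D : Multiset (X × Fin c)) (x : X) : Fin c :=
  majLabel hc (Nk hρ k D x)

section
variable {X : Type*} [MetricSpace X] {c : ℕ} {ρ : X × Fin c → ℕ}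
  (x : X)

lemma knnLE_antisymm (hρ : Function.Injective ρ) {p q : X × Fin c} (h1 : knnLE ρ x p q) (h2 : knnLE ρ x q p) : p = q := by
  rcases h1 with h1 | ⟨h1, h1'⟩ <;> rcases h2 with h2 | ⟨h2, h2'⟩
  · exact absurd h2 (lt_asymm h1)
  · exact absurd h2.symm h1.ne
  · exact absurd h1.symm h2.ne
  · exact hρ (le_antisymm h2' h1')

lemma Nk_spec (hρ : Function.Injective ρ) (k : ℕ) (D : Multiset (X × Fin c)) :
    ∃ l : List (X × Fin c), l.Pairwise (knnLE ρ x) ∧ (l : Multiset (X × Fin c)) = D ∧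
      Nk hρ k D x = ↑(l.take k) := by
  letI : DecidableRel (knnLE ρ x) := Classical.decRel _
  haveI : IsTrans _ (knnLE ρ x) := ⟨by
    rintro p q s (h1 | ⟨h1, h1'⟩) (h2 | ⟨h2, h2'⟩)
    · exact Or.inl (h1.trans h2)
    · exact Or.inl (h1.trans_eq h2)
    · exact Or.inl (h1.trans_lt h2)
    · exact Or.inr ⟨h1.trans h2, h2'.trans h1'⟩⟩
  haveI : IsAntisymm _ (knnLE ρ x) := ⟨by
    rintro p q (h1 | ⟨h1, h1'⟩) (h2 | ⟨h2, h2'⟩)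
    · exact absurd h2 (lt_asymm h1)
    · exact absurd h2.symm h1.ne
    · exact absurd h1.symm h2.ne
    · exact hρ (le_antisymm h2' h1')⟩
  haveI : IsTotal _ (knnLE ρ x) := ⟨by
    intro p q
    rcases lt_trichotomy (dist p.1 x) (dist q.1 x) with h | h | h
    · exact Or.inl (Or.inl h)
    · rcases le_total (ρ q) (ρ p) with h' | h'
      · exact Or.inl (Or.inr ⟨h, h'⟩)
      · exact Or.inr (Or.inr ⟨h.symm, h'⟩)
    · exact Or.inr (Or.inl h)⟩
  exact ⟨D.sort (knnLE ρ x), Multiset.pairwise_sort _ _, Multiset.sort_eq _ _, by unfold Nk; rfl⟩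

lemma Nk_le (hρ : Function.Injective ρ) (k : ℕ) (D : Multiset (X × Fin c)) :
    Nk hρ k D x ≤ D := by
  obtain ⟨l, -, hl2, hl3⟩ := Nk_spec x hρ k D
  rw [hl3, ← hl2]
  exact (List.take_sublist k l).subperm

lemma card_Nk (hρ : Function.Injective ρ) (k : ℕ) (D : Multiset (X × Fin c)) :
    (Nk hρ k D x).card = min k D.card := by
  obtain ⟨l, -, hl2, hl3⟩ := Nk_spec x hρ k D
  rw [hl3, ← hl2]
  simp [List.length_take]

lemma Nk_closed [DecidableEq (X × Fin c)] (hρ : Function.Injective ρ) (k : ℕ)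
    (D : Multiset (X × Fin c))
    {p q : X × Fin c} (hp : p ∈ Nk hρ k D x) (hq : q ∈ D - Nk hρ k D x) :
    knnLE ρ x p q := by
  obtain ⟨l, hl1, hl2, hl3⟩ := Nk_spec x hρ k D
  have hdrop : D - Nk hρ k D x = ↑(l.drop k) := by
    rw [hl3, ← hl2]
    rw [show (l : Multiset (X × Fin c)) = ↑(l.take k) + ↑(l.drop k) by
      rw [Multiset.coe_add, List.take_append_drop]]
    exact add_tsub_cancel_left _ _
  rw [hl3] at hp
  rw [hdrop] at hq
  rw [← List.take_append_drop k l] at hl1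
  exact (List.pairwise_append.mp hl1).2.2 p (by exact_mod_cast hp) q (by exact_mod_cast hq)

lemma pSize_eq {α : Type*} [inst : DecidableEq α] (A B : Multiset α) :
    pSize A B = max A.card B.card - (A ∩ B).card := by
  unfold pSize
  congr 1
  rw [Subsingleton.elim (Classical.decEq α) inst]

lemma card_sub_add {α : Type*} [DecidableEq α] (A B : Multiset α) :
    (A - B).card + (A ∩ B).card = A.card := by
  rw [← Multiset.card_add, Multiset.sub_add_inter]

lemma card_sub_le_pSize_left {α : Type*} [DecidableEq α] (A B : Multiset α) :
    (A - B).card ≤ pSize A B := by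
  have h1 := card_sub_add A B
  rw [pSize_eq]
  omega

lemma card_sub_le_pSize_right {α : Type*} [DecidableEq α] (A B : Multiset α) :
    (B - A).card ≤ pSize A B := by
  have h1 := card_sub_add B A
  rw [pSize_eq, Multiset.inter_comm]
  omega

lemma key_card_le [DecidableEq (X × Fin c)] (hρ : Function.Injective ρ) (k : ℕ)
    (D D' : Multiset (X × Fin c)) :
    ((Nk hρ k D' x) - Nk hρ k D x).card ≤ pSize D D' := by
  set N := Nk hρ k D x with hN
  set N' := Nk hρ k D' x with hN'
  have hND : N ≤ D := Nk_le x hρ k D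
  have hND' : N' ≤ D' := Nk_le x hρ k D'
  have hcN : N.card = min k D.card := card_Nk x hρ k D
  have hcN' : N'.card = min k D'.card := card_Nk x hρ k D'
  have hm1 : (D - D').card ≤ pSize D D' := card_sub_le_pSize_left D D'
  have hm2 : (D' - D).card ≤ pSize D D' := card_sub_le_pSize_right D D'
  by_cases hD : D.card ≤ k
  · have hNeq : N = D := Multiset.eq_of_le_of_card_le hND (by omega)
    rw [hNeq]
    exact le_trans (Multiset.card_le_card (tsub_le_tsub_right hND' D)) hm2
  · push_neg at hD
    by_cases hD' : D'.card ≤ k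
    · have hNeq : N' = D' := Multiset.eq_of_le_of_card_le hND' (by omega)
      rw [hNeq]
      have split : D' - N ≤ (D' - D) + (D ∩ D' - N) := by
        rw [Multiset.le_iff_count]
        intro e
        have hn := Multiset.le_iff_count.mp hND e
        simp only [Multiset.count_sub, Multiset.count_add, Multiset.count_inter]
        omega
      have e1 : (D ∩ D' - N).card + ((D ∩ D') ∩ N).card = (D ∩ D').card :=
        card_sub_add _ _
      have e2 : (D ∩ D') ∩ N = N ∩ D' := by
        rw [Multiset.ext]
        intro e
        have hn := Multiset.le_iff_count.mp hND e
        simp only [Multiset.count_inter]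
        omega
      have e3 : (N ∩ D').card + (N - D').card = N.card := by
        have := card_sub_add N D'
        omega
      have e4 : (N - D').card ≤ (D - D').card :=
        Multiset.card_le_card (tsub_le_tsub_right hND D')
      have e5 : (D' - D).card + (D' ∩ D).card = D'.card := card_sub_add D' D
      have e6 : (D' ∩ D) = D ∩ D' := Multiset.inter_comm _ _
      have e7 := Multiset.card_le_card split
      rw [Multiset.card_add] at e7
      rw [e2] at e1
      rw [e6] at e5
      omega
    · push_neg at hD'
      by_contra hcon
      push_neg at hcon
      have hkN : N.card = k := by omega
      have hkN' : N'.card = k := by omega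
      have hsym : (N - N').card = (N' - N).card := by
        have a1 := card_sub_add N N'
        have a2 := card_sub_add N' N
        rw [Multiset.inter_comm] at a2
        omega
      have split1 : N' - N ≤ (N' - D) + ((N' ∩ D) - N) := by
        rw [Multiset.le_iff_count]
        intro e
        have hn := Multiset.le_iff_count.mp hND e
        simp only [Multiset.count_sub, Multiset.count_add, Multiset.count_inter]
        omega
      have split2 : N - N' ≤ (N - D') + ((N ∩ D') - N') := by
        rw [Multiset.le_iff_count]
        intro e
        have hn := Multiset.le_iff_count.mp hND' e
        simp only [Multiset.count_sub, Multiset.count_add, Multiset.count_inter]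
        omega
      have c1 : (N' - D).card ≤ (D' - D).card :=
        Multiset.card_le_card (tsub_le_tsub_right hND' D)
      have c2 : (N - D').card ≤ (D - D').card :=
        Multiset.card_le_card (tsub_le_tsub_right hND D')
      have q1 : 0 < ((N' ∩ D) - N).card := by
        have := Multiset.card_le_card split1
        rw [Multiset.card_add] at this
        omega
      have q2 : 0 < ((N ∩ D') - N').card := by
        have := Multiset.card_le_card split2
        rw [Multiset.card_add] at this
        omega
      obtain ⟨e0, he0⟩ := Multiset.card_pos_iff_exists_mem.mp q1
      obtain ⟨e1', he1⟩ := Multiset.card_pos_iff_exists_mem.mp q2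
      have hc0 := Multiset.count_pos.mpr he0
      have hc1 := Multiset.count_pos.mpr he1
      simp only [Multiset.count_sub, Multiset.count_inter] at hc0 hc1
      have he0N' : e0 ∈ N' := Multiset.count_pos.mp (by omega)
      have he0DN : e0 ∈ D - N := Multiset.count_pos.mp (by
        rw [Multiset.count_sub]; omega)
      have he1N : e1' ∈ N := Multiset.count_pos.mp (by omega)
      have he1DN' : e1' ∈ D' - N' := Multiset.count_pos.mp (by
        rw [Multiset.count_sub]; omega)
      have r1 : knnLE ρ x e1' e0 := Nk_closed x hρ k D he1N he0DN
      have r2 : knnLE ρ x e0 e1' := Nk_closed x hρ k D' he0N' he1DN'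
      have heq : e0 = e1' := knnLE_antisymm x hρ r2 r1
      subst heq
      omega

lemma pSize_comm {α : Type*} [DecidableEq α] (A B : Multiset α) : pSize A B = pSize B A := by
  rw [pSize_eq, pSize_eq, max_comm, Multiset.inter_comm]

lemma countP_Nk_le [DecidableEq (X × Fin c)] (hρ : Function.Injective ρ) (k : ℕ)
    (D D' : Multiset (X × Fin c)) (P : X × Fin c → Prop) [DecidablePred P] :
    (Nk hρ k D' x).countP P ≤ (Nk hρ k D x).countP P + pSize D D' := by
  set N := Nk hρ k D x
  set N' := Nk hρ k D' x
  calc N'.countP P = (N' - N + N' ∩ N).countP P := by rw [Multiset.sub_add_inter]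
    _ = (N' - N).countP P + (N' ∩ N).countP P := Multiset.countP_add _ _ _
    _ ≤ (N' - N).card + N.countP P :=
        Nat.add_le_add (Multiset.countP_le_card _ _)
          (Multiset.countP_le_of_le _ Multiset.inter_le_right)
    _ ≤ pSize D D' + N.countP P := Nat.add_le_add_right (key_card_le x hρ k D D') _
    _ = N.countP P + pSize D D' := Nat.add_comm _ _


end

/-- Theorem 1 for kNN: if the poisoning size is at most
`⌈(s_a − s_b + 𝟙(b < a))/2⌉ − 1`, the kNN prediction for `x` is unchanged. -/
theorem knn_certified_prediction {X : Type*} [MetricSpace X] {c : ℕ} (hc : 2 ≤ c)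
    (k : ℕ) {ρ : X × Fin c → ℕ} (hρ : Function.Injective ρ)
    (D : Multiset (X × Fin c)) (x : X) (a b : Fin c)
    (ha : a = kNNpred (by omega) hρ k D x)
    (hb : b = secondLabel hc (fun l => votes (Nk hρ k D x) l) a)
    (Dstar : Multiset (X × Fin c))
    (h : (pSize D Dstar : ℤ) ≤
      ⌈(((votes (Nk hρ k D x) a : ℤ) - (votes (Nk hρ k D x) b : ℤ) +
          if b < a then 1 else 0 : ℤ) : ℚ) / 2⌉ - 1) :
    kNNpred (by omega : 0 < c) hρ k Dstar x = a := by
  haveI := Classical.decEq (X × Fin c)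
  have h0c : 0 < c := by omega
  set N := Nk hρ k D x with hNdef
  set N' := Nk hρ k Dstar x with hN'def
  set m := pSize D Dstar with hmdef
  -- facts about a
  have haMem : a ∈ Finset.univ.filter (fun l : Fin c => ∀ l', votes N l' ≤ votes N l) := by
    rw [ha]
    unfold kNNpred majLabel
    exact Finset.max'_mem _ _
  have hamax : ∀ l, votes N l ≤ votes N a := (Finset.mem_filter.mp haMem).2
  -- facts about b
  have hbMem : b ∈ Finset.univ.filter
      (fun l : Fin c => l ≠ a ∧ ∀ l', l' ≠ a → votes N l' ≤ votes N l) := by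
    rw [hb]
    unfold secondLabel
    exact Finset.max'_mem _ _
  have hbne : b ≠ a := (Finset.mem_filter.mp hbMem).2.1
  have hbmax : ∀ l, l ≠ a → votes N l ≤ votes N b := (Finset.mem_filter.mp hbMem).2.2
  have hsec : ∀ l, l ≠ a → votes N b ≤ votes N l → l ≤ b := by
    intro l hla hlb
    rw [hb]
    unfold secondLabel
    apply Finset.le_max'
    exact Finset.mem_filter.mpr ⟨Finset.mem_univ _,
      hla, fun l' hl' => le_trans (hbmax l' hl') hlb⟩
  -- the vote-gap inequality, over ℕ
  have hgap : votes N b + 2 * m + (if b < a then 0 else 1) ≤ votes N a := by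
    have h2 : (m : ℤ) < ⌈(((votes N a : ℤ) - (votes N b : ℤ) +
        if b < a then 1 else 0 : ℤ) : ℚ) / 2⌉ := by omega
    rw [Int.lt_ceil] at h2
    have h3 : (2 * m : ℚ) < ((votes N a : ℤ) - (votes N b : ℤ) +
        if b < a then 1 else 0 : ℤ) := by
      rw [lt_div_iff₀ (by norm_num : (0:ℚ) < 2)] at h2
      calc (2 * m : ℚ) = (m : ℤ) * 2 := by push_cast; ring
        _ < _ := h2
    have h4 : (2 * m : ℤ) < (votes N a : ℤ) - (votes N b : ℤ) +
        if b < a then 1 else 0 := by exact_mod_cast h3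
    split_ifs at h4 ⊢ with hba
    · omega
    · omega
  -- stability of votes
  have stab1 : ∀ l, votes N' l ≤ votes N l + m := by
    intro l
    exact countP_Nk_le x hρ k D Dstar _
  have stab2 : ∀ l, votes N l ≤ votes N' l + m := by
    intro l
    have := countP_Nk_le x hρ k Dstar D (fun p => p.2 = l)
    rwa [pSize_comm Dstar D, ← hmdef] at this
  -- conclude
  show majLabel h0c N' = a
  unfold majLabel
  apply le_antisymm
  · apply Finset.max'_le
    intro l hl
    by_contra hla
    push_neg at hla
    have hlne : l ≠ a := (ne_of_gt hla)
    have h5 : votes N' a ≤ votes N' l := (Finset.mem_filter.mp hl).2 a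
    have h6 : votes N l ≤ votes N b := hbmax l hlne
    have h7 : votes N a ≤ votes N l + 2 * m := by
      have := stab1 l
      have := stab2 a
      omega
    by_cases hba : b < a
    · simp only [hba, if_true] at hgap
      have h8 : votes N b ≤ votes N l := by omega
      have h9 : l ≤ b := hsec l hlne h8
      exact absurd (lt_trans hba hla) (not_lt.mpr h9)
    · simp only [hba, if_false] at hgap
      omega
  · apply Finset.le_max'
    refine Finset.mem_filter.mpr ⟨Finset.mem_univ _, ?_⟩
    intro l'
    by_cases hl'a : l' = a
    · rw [hl'a]
    · have h6 : votes N l' ≤ votes N b := hbmax l' hl'a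
      have := stab1 l'
      have := stab2 a
      have : (if b < a then 0 else 1) ≤ 1 := by split_ifs <;> omega
      omega
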